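/- Let (A, 𝒜, μ) be a measure space, (B,|·|_B) a Banach space of Rademacher type p ∈ (1,2], and q ∈ [1,∞). Then the Bochner space L^q(A;B) is of Rademacher type p ∧ q: there is a constant M such that for all N, all b₁,…,b_N ∈ L^q(A;B), and i.i.d. Rademacher X₁,…,X_N, E[‖∑_{k=1}^N X_k b_k‖_{L^q(A;B)}] ≤ M (∑_{k=1}^N ‖b_k‖_{L^q(A;B)}^{p∧q})^{1/(p∧q)}. -/

import Mathlib

open MeasureTheory
open scoped ENNReal

open scoped Classical



section comb

variable {B : Type*} [NormedAddCommGroup B] [NormedSpace ℝ B] {n : ℕ}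

/-- sign of a coordinate -/
def rsgn {n : ℕ} (x : Fin n → Bool) (k : Fin n) : ℝ := if x k then 1 else -1

def rS {n : ℕ} (v : Fin n → B) (x : Fin n → Bool) : B := ∑ k : Fin n, rsgn x k • v k

def rSp {n : ℕ} (v : Fin n → B) (j : ℕ) (x : Fin n → Bool) : B :=
  ∑ k : Fin n, if (k : ℕ) < j then rsgn x k • v k else 0

def rrefl {n : ℕ} (j : ℕ) (x : Fin n → Bool) : Fin n → Bool :=
  fun k => if (k : ℕ) < j then x k else !(x k)

lemma rrefl_rrefl (j : ℕ) (x : Fin n → Bool) : rrefl j (rrefl j x) = x := by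
  funext k; simp only [rrefl]; split_ifs <;> simp

lemma rsgn_rrefl (j : ℕ) (x : Fin n → Bool) (k : Fin n) :
    rsgn (rrefl j x) k = if (k : ℕ) < j then rsgn x k else -rsgn x k := by
  by_cases h : (k : ℕ) < j <;> cases hx : x k <;> simp [rsgn, rrefl, h, hx]

lemma rsgn_norm (x : Fin n → Bool) (k : Fin n) : ‖rsgn x k‖ = 1 := by
  simp only [rsgn]; split_ifs <;> simp

lemma rS_rrefl (v : Fin n → B) (j : ℕ) (x : Fin n → Bool) :
    rS v (rrefl j x) = (2 : ℝ) • rSp v j x - rS v x := by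
  simp only [rS, rSp, Finset.smul_sum, ← Finset.sum_sub_distrib]
  refine Finset.sum_congr rfl fun k _ => ?_
  rw [rsgn_rrefl]
  split_ifs with h
  · rw [two_smul]; abel
  · rw [neg_smul, smul_zero, zero_sub]

lemma rSp_congr (v : Fin n → B) (j : ℕ) {x y : Fin n → Bool}
    (h : ∀ k : Fin n, (k : ℕ) < j → x k = y k) : rSp v j x = rSp v j y := by
  refine Finset.sum_congr rfl fun k _ => ?_
  split_ifs with hk
  · rw [show rsgn x k = rsgn y k by simp only [rsgn, h k hk]]
  · rfl

lemma rSp_top (v : Fin n → B) (x : Fin n → Bool) : rSp v n x = rS v x := by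
  refine Finset.sum_congr rfl fun k _ => ?_
  rw [if_pos k.isLt]

lemma rSp_zero (v : Fin n → B) (x : Fin n → Bool) : rSp v 0 x = 0 := by
  simp [rSp]

lemma rSp_succ (v : Fin n → B) {j : ℕ} (hj : j < n) (x : Fin n → Bool) :
    rSp v (j + 1) x = rSp v j x + rsgn x ⟨j, hj⟩ • v ⟨j, hj⟩ := by
  have h2 : rsgn x ⟨j, hj⟩ • v ⟨j, hj⟩
      = ∑ k : Fin n, if k = ⟨j, hj⟩ then rsgn x k • v k else 0 := by
    rw [Finset.sum_ite_eq' Finset.univ (⟨j, hj⟩ : Fin n) (fun k => rsgn x k • v k)]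
    simp
  rw [h2, rSp, rSp, ← Finset.sum_add_distrib]
  refine Finset.sum_congr rfl fun k _ => ?_
  have hkj : (k = (⟨j, hj⟩ : Fin n)) ↔ (k : ℕ) = j := by
    constructor
    · intro h; rw [h]
    · intro h; exact Fin.ext h
  rcases lt_trichotomy (k : ℕ) j with h | h | h
  · rw [if_pos (by omega), if_pos h, if_neg (by rw [hkj]; omega), add_zero]
  · rw [if_pos (by omega), if_neg (by omega), if_pos (hkj.mpr h), zero_add]
  · rw [if_neg (by omega), if_neg (by omega), if_neg (by rw [hkj]; omega), add_zero]

lemma rT_eq (v : Fin n → B) (j : ℕ) (x : Fin n → Bool) :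
    rS v x - rSp v j x = ∑ k : Fin n, if (k : ℕ) < j then 0 else rsgn x k • v k := by
  simp only [rS, rSp, ← Finset.sum_sub_distrib]
  refine Finset.sum_congr rfl fun k _ => ?_
  split_ifs with h
  · rw [sub_self]
  · rw [sub_zero]

lemma rT_congr (v : Fin n → B) (j : ℕ) {x y : Fin n → Bool}
    (h : ∀ k : Fin n, ¬ (k : ℕ) < j → x k = y k) :
    rS v x - rSp v j x = rS v y - rSp v j y := by
  rw [rT_eq, rT_eq]
  refine Finset.sum_congr rfl fun k _ => ?_
  split_ifs with hk
  · rfl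
  · rw [show rsgn x k = rsgn y k by simp only [rsgn, h k hk]]

lemma norm_rS_le (v : Fin n → B) (x : Fin n → Bool) : ‖rS v x‖ ≤ ∑ k : Fin n, ‖v k‖ := by
  refine (norm_sum_le _ _).trans (Finset.sum_le_sum fun k _ => ?_)
  rw [norm_smul, rsgn_norm, one_mul]

/-- splicing bijection: a set depending on low coordinates and a set depending on
high coordinates are "independent" for counting. -/
lemma card_inter_mul (j : ℕ) (U V : Finset (Fin n → Bool))
    (hU : ∀ x y : Fin n → Bool, (∀ k : Fin n, (k : ℕ) < j → x k = y k) → x ∈ U → y ∈ U)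
    (hV : ∀ x y : Fin n → Bool, (∀ k : Fin n, ¬ (k : ℕ) < j → x k = y k) → x ∈ V → y ∈ V) :
    U.card * V.card = (U ∩ V).card * 2 ^ n := by
  classical
  have hcard : (Finset.univ : Finset (Fin n → Bool)).card = 2 ^ n := by
    rw [Finset.card_univ]
    simp [Fintype.card_fun]
  calc U.card * V.card = (U ×ˢ V).card := (Finset.card_product U V).symm
    _ = ((U ∩ V) ×ˢ (Finset.univ : Finset (Fin n → Bool))).card := ?_
    _ = (U ∩ V).card * 2 ^ n := by rw [Finset.card_product, hcard]
  set spl : (Fin n → Bool) → (Fin n → Bool) → (Fin n → Bool) :=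
    fun x y k => if (k : ℕ) < j then x k else y k with hspl
  have key : ∀ x y : Fin n → Bool, spl (spl x y) (spl y x) = x ∧ spl (spl y x) (spl x y) = y := by
    intro x y
    constructor <;> (funext k; simp only [hspl]; split_ifs <;> rfl)
  refine Finset.card_bij' (fun z _ => (spl z.1 z.2, spl z.2 z.1))
    (fun z _ => (spl z.1 z.2, spl z.2 z.1)) ?_ ?_ ?_ ?_
  · rintro ⟨x, y⟩ hxy
    rw [Finset.mem_product] at hxy
    rw [Finset.mem_product, Finset.mem_inter]
    refine ⟨⟨hU x _ (fun k hk => by simp only [hspl, if_pos hk]) hxy.1,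
      hV y _ (fun k hk => by simp only [hspl, if_neg hk]) hxy.2⟩, Finset.mem_univ _⟩
  · rintro ⟨x, y⟩ hxy
    rw [Finset.mem_product, Finset.mem_inter] at hxy
    rw [Finset.mem_product]
    exact ⟨hU x _ (fun k hk => by simp only [hspl, if_pos hk]) hxy.1.1,
      hV x _ (fun k hk => by simp only [hspl, if_neg hk]) hxy.1.2⟩
  · rintro ⟨x, y⟩ _
    simp only [Prod.mk.injEq]
    exact (key x y)
  · rintro ⟨x, y⟩ _
    simp only [Prod.mk.injEq]
    exact (key x y)

end comb

section squaring

variable {B : Type*} [NormedAddCommGroup B] [NormedSpace ℝ B] {n : ℕ}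

lemma squaring (v : Fin n → B) (t : ℝ) (ht : 0 ≤ t) (hvt : ∀ k, ‖v k‖ ≤ t) :
    (Finset.univ.filter fun x : Fin n → Bool => 3 * t < ‖rS v x‖).card * 2 ^ n
      ≤ 4 * (Finset.univ.filter fun x : Fin n → Bool => t < ‖rS v x‖).card ^ 2 := by
  classical
  set G : Finset (Fin n → Bool) := Finset.univ.filter fun x => t < ‖rS v x‖ with hG
  set E : ℕ → Finset (Fin n → Bool) := fun j => Finset.univ.filter
    (fun x => t < ‖rSp v j x‖ ∧ ∀ i < j, ¬ t < ‖rSp v i x‖) with hE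
  set F : ℕ → Finset (Fin n → Bool) := fun j => Finset.univ.filter
    (fun x => t < ‖rS v x - rSp v j x‖) with hF
  -- invariance of E j under changes of high coordinates
  have hEinv : ∀ (j : ℕ) (x y : Fin n → Bool),
      (∀ k : Fin n, (k : ℕ) < j → x k = y k) → x ∈ E j → y ∈ E j := by
    intro j x y hxy hx
    simp only [hE, Finset.mem_filter, Finset.mem_univ, true_and] at hx ⊢
    have hsp : ∀ i ≤ j, rSp v i x = rSp v i y := fun i hi =>
      rSp_congr v i (fun k hk => hxy k (lt_of_lt_of_le hk hi))
    exact ⟨(hsp j le_rfl) ▸ hx.1, fun i hi => (hsp i hi.le) ▸ hx.2 i hi⟩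
  -- invariance of F j under changes of low coordinates
  have hFinv : ∀ (j : ℕ) (x y : Fin n → Bool),
      (∀ k : Fin n, ¬ (k : ℕ) < j → x k = y k) → x ∈ F j → y ∈ F j := by
    intro j x y hxy hx
    simp only [hF, Finset.mem_filter, Finset.mem_univ, true_and] at hx ⊢
    rwa [← rT_congr v j hxy]
  -- reflection claim 3 : (F j).card ≤ 2 * G.card
  have claim3 : ∀ j : ℕ, (F j).card ≤ 2 * G.card := by
    intro j
    have hsub : F j ⊆ G ∪ G.image (rrefl (n := n) j) := by
      intro x hx
      simp only [hF, Finset.mem_filter, Finset.mem_univ, true_and] at hx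
      have hkey : rS v x - rS v (rrefl j x) = (2 : ℝ) • (rS v x - rSp v j x) := by
        rw [rS_rrefl]; module
      have h2 : 2 * t < ‖rS v x‖ + ‖rS v (rrefl j x)‖ := by
        have := norm_sub_le (rS v x) (rS v (rrefl j x))
        rw [hkey, norm_smul] at this
        simp only [Real.norm_ofNat] at this
        nlinarith
      rcases lt_or_ge t ‖rS v x‖ with h | h
      · exact Finset.mem_union_left _ (by simp [hG, h])
      · have : t < ‖rS v (rrefl j x)‖ := by linarith
        refine Finset.mem_union_right _ (Finset.mem_image.mpr ⟨rrefl j x, by simp [hG, this],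
          rrefl_rrefl j x⟩)
    calc (F j).card ≤ (G ∪ G.image (rrefl (n := n) j)).card := Finset.card_le_card hsub
      _ ≤ G.card + (G.image (rrefl (n := n) j)).card := Finset.card_union_le _ _
      _ ≤ G.card + G.card := Nat.add_le_add le_rfl Finset.card_image_le
      _ = 2 * G.card := by ring
  -- reflection claim 1 : (E j).card ≤ 2 * (E j ∩ G).card
  have claim1 : ∀ j : ℕ, (E j).card ≤ 2 * (E j ∩ G).card := by
    intro j
    have hsub : E j ⊆ (E j ∩ G) ∪ (E j ∩ G).image (rrefl (n := n) j) := by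
      intro x hx
      have hx' := hx
      simp only [hE, Finset.mem_filter, Finset.mem_univ, true_and] at hx'
      have hkey : rS v x + rS v (rrefl j x) = (2 : ℝ) • rSp v j x := by
        rw [rS_rrefl]; module
      have h2 : 2 * t < ‖rS v x‖ + ‖rS v (rrefl j x)‖ := by
        have hnn := norm_add_le (rS v x) (rS v (rrefl j x))
        rw [hkey, norm_smul] at hnn
        simp only [Real.norm_ofNat] at hnn
        nlinarith [hx'.1]
      rcases lt_or_ge t ‖rS v x‖ with h | h
      · exact Finset.mem_union_left _ (Finset.mem_inter.mpr ⟨hx, by simp [hG, h]⟩)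
      · have hR : t < ‖rS v (rrefl j x)‖ := by linarith
        have hrE : rrefl j x ∈ E j :=
          hEinv j x (rrefl j x) (fun k hk => by simp [rrefl, hk]) hx
        refine Finset.mem_union_right _ (Finset.mem_image.mpr ⟨rrefl j x,
          Finset.mem_inter.mpr ⟨hrE, by simp [hG, hR]⟩, rrefl_rrefl j x⟩)
    calc (E j).card ≤ ((E j ∩ G) ∪ (E j ∩ G).image (rrefl (n := n) j)).card :=
        Finset.card_le_card hsub
      _ ≤ (E j ∩ G).card + ((E j ∩ G).image (rrefl (n := n) j)).card := Finset.card_union_le _ _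
      _ ≤ (E j ∩ G).card + (E j ∩ G).card := Nat.add_le_add le_rfl Finset.card_image_le
      _ = 2 * (E j ∩ G).card := by ring
  -- the E j are pairwise disjoint
  have disj : ∀ j j' : ℕ, j ≠ j' → Disjoint (E j) (E j') := by
    have key : ∀ j j' : ℕ, j < j' → Disjoint (E j) (E j') := by
      intro j j' hlt
      rw [Finset.disjoint_left]
      intro x hx hx'
      simp only [hE, Finset.mem_filter, Finset.mem_univ, true_and] at hx hx'
      exact hx'.2 j hlt hx.1
    intro j j' hne
    rcases hne.lt_or_gt with h | h
    · exact key j j' h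
    · exact (key j' j h).symm
  -- covering
  have cover : (Finset.univ.filter fun x : Fin n → Bool => 3 * t < ‖rS v x‖)
      ⊆ (Finset.range (n + 1)).biUnion (fun j => E j ∩ F j) := by
    intro x hx
    simp only [Finset.mem_filter, Finset.mem_univ, true_and] at hx
    have hPn : t < ‖rSp v n x‖ := by rw [rSp_top]; nlinarith
    have hex : ∃ i, t < ‖rSp v i x‖ := ⟨n, hPn⟩
    set j := Nat.find hex with hj
    have hPj : t < ‖rSp v j x‖ := Nat.find_spec hex
    have hmin : ∀ i < j, ¬ t < ‖rSp v i x‖ := fun i hi => Nat.find_min hex hi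
    have hjn : j ≤ n := Nat.find_min' hex hPn
    have hj1 : 1 ≤ j := by
      by_contra h
      have : j = 0 := by omega
      rw [this, rSp_zero] at hPj
      simp at hPj
      linarith
    clear_value j
    obtain ⟨i, rfl⟩ : ∃ i, j = i + 1 := ⟨j - 1, by omega⟩
    have hin : i < n := by omega
    have hbound : ‖rSp v (i + 1) x‖ ≤ 2 * t := by
      rw [rSp_succ v hin]
      have h1 : ‖rSp v i x‖ ≤ t := le_of_not_gt (hmin i (by omega))
      have h2 : ‖rsgn x ⟨i, hin⟩ • v ⟨i, hin⟩‖ ≤ t := by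
        rw [norm_smul, rsgn_norm, one_mul]; exact hvt _
      calc ‖rSp v i x + rsgn x ⟨i, hin⟩ • v ⟨i, hin⟩‖ ≤ _ := norm_add_le _ _
        _ ≤ 2 * t := by linarith
    have hT : t < ‖rS v x - rSp v (i + 1) x‖ := by
      have := norm_sub_norm_le (rS v x) (rSp v (i + 1) x)
      have h3 := abs_le.mp (le_refl |‖rS v x‖ - ‖rSp v (i+1) x‖|)
      calc t = 3 * t - 2 * t := by ring
        _ < ‖rS v x‖ - ‖rSp v (i + 1) x‖ := by linarith
        _ ≤ ‖rS v x - rSp v (i + 1) x‖ := norm_sub_norm_le _ _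
    refine Finset.mem_biUnion.mpr ⟨i + 1, Finset.mem_range.mpr (by omega),
      Finset.mem_inter.mpr ⟨?_, ?_⟩⟩
    · rw [hE]
      exact Finset.mem_filter.mpr ⟨Finset.mem_univ _, hPj, hmin⟩
    · rw [hF]
      exact Finset.mem_filter.mpr ⟨Finset.mem_univ _, hT⟩
  -- assemble
  have hsum : ∑ j ∈ Finset.range (n + 1), (E j ∩ G).card ≤ G.card := by
    rw [← Finset.card_biUnion]
    · exact Finset.card_le_card (Finset.biUnion_subset.mpr fun j _ =>
        Finset.inter_subset_right)
    · intro j hj j' hj' hne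
      exact (disj j j' hne).mono Finset.inter_subset_left Finset.inter_subset_left
  calc (Finset.univ.filter fun x : Fin n → Bool => 3 * t < ‖rS v x‖).card * 2 ^ n
      ≤ ((Finset.range (n + 1)).biUnion fun j => E j ∩ F j).card * 2 ^ n :=
        Nat.mul_le_mul_right _ (Finset.card_le_card cover)
    _ ≤ (∑ j ∈ Finset.range (n + 1), (E j ∩ F j).card) * 2 ^ n :=
        Nat.mul_le_mul_right _ Finset.card_biUnion_le
    _ = ∑ j ∈ Finset.range (n + 1), (E j ∩ F j).card * 2 ^ n := by rw [Finset.sum_mul]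
    _ = ∑ j ∈ Finset.range (n + 1), (E j).card * (F j).card := by
        refine Finset.sum_congr rfl fun j _ => ?_
        rw [card_inter_mul j (E j) (F j) (hEinv j) (hFinv j)]
    _ ≤ ∑ j ∈ Finset.range (n + 1), (2 * (E j ∩ G).card) * (2 * G.card) :=
        Finset.sum_le_sum fun j _ => Nat.mul_le_mul (claim1 j) (claim3 j)
    _ = 4 * ((∑ j ∈ Finset.range (n + 1), (E j ∩ G).card) * G.card) := by
        rw [Finset.sum_mul, Finset.mul_sum]
        exact Finset.sum_congr rfl fun j _ => by ring
    _ ≤ 4 * (G.card * G.card) := by gcongr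
    _ = 4 * G.card ^ 2 := by ring
end squaring

section realineq

lemma sum_rpow_le_rpow_sum {ι : Type*} (t : Finset ι) (f : ι → ℝ) (s : ℝ) (hs : 1 ≤ s)
    (hf : ∀ i ∈ t, 0 ≤ f i) : ∑ i ∈ t, f i ^ s ≤ (∑ i ∈ t, f i) ^ s := by
  have hs0 : 0 < s := lt_of_lt_of_le zero_lt_one hs
  have hsum0 : 0 ≤ ∑ i ∈ t, f i := Finset.sum_nonneg hf
  have hstep : ∀ i ∈ t, f i ^ s ≤ (∑ i ∈ t, f i) ^ (s - 1) * f i := by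
    intro i hi
    rcases (hf i hi).eq_or_lt with h | h
    · rw [← h, Real.zero_rpow hs0.ne', mul_zero]
    · have h1 : f i ^ s = f i ^ (s - 1) * f i := by
        rw [← Real.rpow_add_one h.ne' (s - 1)]
        norm_num
      rw [h1]
      refine mul_le_mul_of_nonneg_right ?_ (hf i hi)
      exact Real.rpow_le_rpow (hf i hi) (Finset.single_le_sum hf hi) (by linarith)
  calc ∑ i ∈ t, f i ^ s ≤ ∑ i ∈ t, (∑ i ∈ t, f i) ^ (s - 1) * f i :=
        Finset.sum_le_sum hstep
    _ = (∑ i ∈ t, f i) ^ (s - 1) * ∑ i ∈ t, f i := by rw [← Finset.mul_sum]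
    _ = (∑ i ∈ t, f i) ^ s := by
        rcases hsum0.eq_or_lt with h | h
        · rw [← h, mul_zero, Real.zero_rpow hs0.ne']
        · rw [← Real.rpow_add_one h.ne' (s - 1)]
          norm_num

lemma lp_norm_mono {ι : Type*} (t : Finset ι) (f : ι → ℝ) (r pp : ℝ) (hr : 0 < r)
    (hrp : r ≤ pp) (hf : ∀ i ∈ t, 0 ≤ f i) :
    (∑ i ∈ t, f i ^ pp) ^ (1 / pp) ≤ (∑ i ∈ t, f i ^ r) ^ (1 / r) := by
  have hpp : 0 < pp := lt_of_lt_of_le hr hrp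
  set s := pp / r with hsdef
  have hs1 : 1 ≤ s := (one_le_div hr).mpr hrp
  have key : ∑ i ∈ t, f i ^ pp ≤ (∑ i ∈ t, f i ^ r) ^ s := by
    have h1 : ∀ i ∈ t, f i ^ pp = (f i ^ r) ^ s := by
      intro i hi
      rw [← Real.rpow_mul (hf i hi)]
      congr 1
      rw [hsdef]
      field_simp [hr.ne']
    rw [Finset.sum_congr rfl h1]
    exact sum_rpow_le_rpow_sum t (fun i => f i ^ r) s hs1
      (fun i _ => Real.rpow_nonneg (hf i (by assumption)) r)
  calc (∑ i ∈ t, f i ^ pp) ^ (1 / pp) ≤ ((∑ i ∈ t, f i ^ r) ^ s) ^ (1 / pp) := by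
        refine Real.rpow_le_rpow (Finset.sum_nonneg fun i hi => Real.rpow_nonneg (hf i hi) _)
          key (by positivity)
    _ = (∑ i ∈ t, f i ^ r) ^ (1 / r) := by
        rw [← Real.rpow_mul (Finset.sum_nonneg fun i hi => Real.rpow_nonneg (hf i hi) _)]
        congr 1
        rw [hsdef]
        field_simp [hr.ne', hpp.ne']

end realineq

section core

variable {B : Type*} [NormedAddCommGroup B] [NormedSpace ℝ B]

set_option maxHeartbeats 2000000 in
theorem coreA (p q Mp : ℝ) (hp1 : 1 < p) (hq : 1 ≤ q) (hMp : 0 < Mp)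
    (htype : ∀ (m : ℕ) (w : Fin m → B),
      (1 / 2 ^ m : ℝ) * ∑ x : Fin m → Bool, ‖rS w x‖ ≤ Mp * (∑ i, ‖w i‖ ^ p) ^ (1 / p))
    (n : ℕ) (v : Fin n → B) :
    (1 / 2 ^ n : ℝ) * ∑ x : Fin n → Bool, ‖rS v x‖ ^ q
      ≤ ((3 : ℝ) ^ q + 1) *
        ((4 * 3 ^ (2 * q) * Mp + 1) * (∑ i, ‖v i‖ ^ min p q) ^ (1 / min p q)) ^ q := by
  classical
  have hq0 : (0 : ℝ) < q := lt_of_lt_of_le zero_lt_one hq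
  set r := min p q with hrdef
  have hr1 : 1 ≤ r := le_min hp1.le hq
  have hr0 : (0 : ℝ) < r := lt_of_lt_of_le zero_lt_one hr1
  have hrp : r ≤ p := min_le_left _ _
  set σ := (∑ i, ‖v i‖ ^ r) ^ (1 / r) with hσdef
  have hsum_nonneg : 0 ≤ ∑ i, ‖v i‖ ^ r :=
    Finset.sum_nonneg fun i _ => Real.rpow_nonneg (norm_nonneg _) _
  have hσ0 : 0 ≤ σ := Real.rpow_nonneg hsum_nonneg _
  have h2n : (0 : ℝ) < 2 ^ n := by positivity
  have h3q : (0 : ℝ) < (3 : ℝ) ^ (2 * q) := Real.rpow_pos_of_pos (by norm_num) _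
  rcases hσ0.eq_or_lt with hσz | hσpos
  · -- degenerate case : all vectors vanish
    have hv0 : ∀ i : Fin n, v i = 0 := by
      intro i
      have hs0 : ∑ i, ‖v i‖ ^ r = 0 := by
        by_contra h
        have : 0 < ∑ i, ‖v i‖ ^ r := lt_of_le_of_ne hsum_nonneg (Ne.symm h)
        have := Real.rpow_pos_of_pos this (1 / r)
        rw [← hσdef] at this
        linarith [hσz]
      have hterm : ‖v i‖ ^ r = 0 :=
        (Finset.sum_eq_zero_iff_of_nonneg fun i _ =>
          Real.rpow_nonneg (norm_nonneg _) _).mp hs0 i (Finset.mem_univ i)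
      have : ‖v i‖ = 0 := by
        by_contra h
        have h1 : 0 < ‖v i‖ := lt_of_le_of_ne (norm_nonneg _) (Ne.symm h)
        exact absurd hterm (Real.rpow_pos_of_pos h1 r).ne'
      exact norm_eq_zero.mp this
    have hS0 : ∀ x : Fin n → Bool, rS v x = 0 := by
      intro x
      simp only [rS]
      rw [Finset.sum_eq_zero]
      intro k _
      rw [hv0 k, smul_zero]
    have hLHS : (1 / 2 ^ n : ℝ) * ∑ x : Fin n → Bool, ‖rS v x‖ ^ q = 0 := by
      rw [Finset.sum_eq_zero, mul_zero]
      intro x _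
      rw [hS0 x, norm_zero, Real.zero_rpow hq0.ne']
    rw [hLHS]
    positivity
  · -- main case
    have hvσ : ∀ k, ‖v k‖ ≤ σ := by
      intro k
      have h1 : ‖v k‖ ^ r ≤ ∑ i, ‖v i‖ ^ r :=
        Finset.single_le_sum (fun i _ => Real.rpow_nonneg (norm_nonneg _) _)
          (Finset.mem_univ k)
      calc ‖v k‖ = (‖v k‖ ^ r) ^ (1 / r) := by
            rw [← Real.rpow_mul (norm_nonneg _), mul_one_div, div_self hr0.ne',
              Real.rpow_one]
        _ ≤ σ := Real.rpow_le_rpow (Real.rpow_nonneg (norm_nonneg _) _) h1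
            (by positivity)
    set Eabs := (1 / 2 ^ n : ℝ) * ∑ x : Fin n → Bool, ‖rS v x‖ with hEdef
    have hEabs0 : 0 ≤ Eabs := by
      rw [hEdef]
      have : 0 ≤ ∑ x : Fin n → Bool, ‖rS v x‖ :=
        Finset.sum_nonneg fun x _ => norm_nonneg _
      positivity
    have hEtype : Eabs ≤ Mp * σ := by
      refine (htype n v).trans ?_
      refine mul_le_mul_of_nonneg_left ?_ hMp.le
      exact lp_norm_mono Finset.univ (fun i => ‖v i‖) r p hr0 hrp
        (fun i _ => norm_nonneg _)
    set K := 4 * (3 : ℝ) ^ (2 * q) * Mp + 1 with hKdef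
    have hK1 : 1 ≤ K := by
      have h0 : 0 ≤ 4 * (3 : ℝ) ^ (2 * q) * Mp := by positivity
      rw [hKdef]; linarith
    set t₀ := max ((4 * (3 : ℝ) ^ (2 * q)) * Eabs) σ with ht₀def
    have ht₀σ : σ ≤ t₀ := le_max_right _ _
    have ht₀pos : 0 < t₀ := lt_of_lt_of_le hσpos ht₀σ
    have ht₀E : 4 * (3 : ℝ) ^ (2 * q) * Eabs ≤ t₀ := le_max_left _ _
    have ht₀K : t₀ ≤ K * σ := by
      refine max_le ?_ ?_
      · calc 4 * (3 : ℝ) ^ (2 * q) * Eabs ≤ 4 * (3 : ℝ) ^ (2 * q) * (Mp * σ) :=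
            mul_le_mul_of_nonneg_left hEtype (by positivity)
          _ = (4 * (3 : ℝ) ^ (2 * q) * Mp) * σ := by ring
          _ ≤ K * σ := by
              rw [hKdef]
              have := hσ0
              nlinarith [hσ0]
      · exact le_mul_of_one_le_left hσ0 hK1
    -- tail probabilities
    set Pt : ℝ → ℝ := fun t =>
      ((Finset.univ.filter fun x : Fin n → Bool => t < ‖rS v x‖).card : ℝ) / 2 ^ n
      with hPtdef
    have hPt0 : ∀ t, 0 ≤ Pt t := by
      intro t
      rw [hPtdef]
      positivity
    -- Markov
    have hmark : Pt t₀ ≤ Eabs / t₀ := by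
      set c := ((Finset.univ.filter fun x : Fin n → Bool => t₀ < ‖rS v x‖).card : ℝ)
        with hcdef
      have hsum : c * t₀ ≤ ∑ x : Fin n → Bool, ‖rS v x‖ := by
        calc c * t₀
            = ∑ _x ∈ (Finset.univ.filter fun x : Fin n → Bool => t₀ < ‖rS v x‖), t₀ := by
              rw [Finset.sum_const, nsmul_eq_mul, hcdef]
          _ ≤ ∑ x ∈ (Finset.univ.filter fun x : Fin n → Bool => t₀ < ‖rS v x‖), ‖rS v x‖ :=
              Finset.sum_le_sum fun x hx => (Finset.mem_filter.mp hx).2.le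
          _ ≤ ∑ x : Fin n → Bool, ‖rS v x‖ :=
              Finset.sum_le_sum_of_subset_of_nonneg (Finset.filter_subset _ _)
                (fun x _ _ => norm_nonneg _)
      show c / 2 ^ n ≤ Eabs / t₀
      rw [div_le_div_iff₀ h2n ht₀pos]
      calc c * t₀ ≤ ∑ x : Fin n → Bool, ‖rS v x‖ := hsum
        _ = Eabs * 2 ^ n := by rw [hEdef]; field_simp
    -- squaring
    have hsq : ∀ t : ℝ, σ ≤ t → Pt (3 * t) ≤ 4 * Pt t ^ 2 := by
      intro t htσ
      have ht0 : 0 ≤ t := hσ0.trans htσ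
      have hvt : ∀ k, ‖v k‖ ≤ t := fun k => (hvσ k).trans htσ
      have hnat := squaring v t ht0 hvt
      set N3 := (Finset.univ.filter fun x : Fin n → Bool => 3 * t < ‖rS v x‖).card
      set Nt := (Finset.univ.filter fun x : Fin n → Bool => t < ‖rS v x‖).card
      have hcast : (N3 : ℝ) * 2 ^ n ≤ 4 * (Nt : ℝ) ^ 2 := by exact_mod_cast hnat
      show (N3 : ℝ) / 2 ^ n ≤ 4 * ((Nt : ℝ) / 2 ^ n) ^ 2
      rw [div_pow, ← mul_div_assoc, div_le_div_iff₀ h2n (by positivity)]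
      calc (N3 : ℝ) * ((2 : ℝ) ^ n) ^ 2 = ((N3 : ℝ) * 2 ^ n) * 2 ^ n := by ring
        _ ≤ (4 * (Nt : ℝ) ^ 2) * 2 ^ n := mul_le_mul_of_nonneg_right hcast h2n.le
    -- tail induction
    have htail : ∀ j : ℕ, 4 * Pt (3 ^ j * t₀) ≤ (3 : ℝ) ^ (-(2 * q) * 2 ^ j) := by
      intro j
      induction j with
      | zero =>
        simp only [pow_zero, one_mul, mul_one]
        have h1 : Pt t₀ ≤ Eabs / t₀ := hmark
        have hmul : (3 : ℝ) ^ (-(2 * q)) * 3 ^ (2 * q) = 1 := by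
          rw [← Real.rpow_add (by norm_num : (0:ℝ) < 3)]
          rw [neg_add_cancel, Real.rpow_zero]
        have h2 : 4 * Eabs ≤ (3 : ℝ) ^ (-(2 * q)) * t₀ := by
          calc 4 * Eabs = (3 : ℝ) ^ (-(2 * q)) * (4 * 3 ^ (2 * q) * Eabs) := by
                rw [show (3 : ℝ) ^ (-(2 * q)) * (4 * 3 ^ (2 * q) * Eabs)
                  = 4 * ((3 : ℝ) ^ (-(2 * q)) * 3 ^ (2 * q)) * Eabs by ring, hmul]
                ring
            _ ≤ (3 : ℝ) ^ (-(2 * q)) * t₀ :=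
                mul_le_mul_of_nonneg_left ht₀E (Real.rpow_nonneg (by norm_num) _)
        calc 4 * Pt t₀ ≤ 4 * (Eabs / t₀) := by linarith
          _ = 4 * Eabs / t₀ := by ring
          _ ≤ (3 : ℝ) ^ (-(2 * q)) * t₀ / t₀ := by gcongr
          _ = (3 : ℝ) ^ (-(2 * q)) := by field_simp
      | succ j ih =>
        have h3j : (1 : ℝ) ≤ 3 ^ j := one_le_pow₀ (by norm_num)
        have hstep := hsq (3 ^ j * t₀) (by
          calc σ ≤ t₀ := ht₀σ
            _ = 1 * t₀ := (one_mul t₀).symm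
            _ ≤ 3 ^ j * t₀ := mul_le_mul_of_nonneg_right h3j ht₀pos.le)
        have heq : (3 : ℝ) ^ (j + 1) * t₀ = 3 * (3 ^ j * t₀) := by ring
        rw [heq]
        calc 4 * Pt (3 * (3 ^ j * t₀)) ≤ 4 * (4 * Pt (3 ^ j * t₀) ^ 2) := by
              linarith [hstep]
          _ = (4 * Pt (3 ^ j * t₀)) ^ 2 := by ring
          _ ≤ ((3 : ℝ) ^ (-(2 * q) * 2 ^ j)) ^ 2 := by
              refine pow_le_pow_left₀ (by positivity) ih 2
          _ = (3 : ℝ) ^ (-(2 * q) * 2 ^ (j + 1)) := by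
              rw [← Real.rpow_natCast ((3 : ℝ) ^ (-(2 * q) * 2 ^ j)) 2,
                ← Real.rpow_mul (by norm_num : (0:ℝ) ≤ 3)]
              congr 1
              push_cast
              ring
    -- upper bound on all values
    have hub : ∀ x : Fin n → Bool, ‖rS v x‖ ≤ 3 ^ n * t₀ := by
      intro x
      have hn3 : (n : ℝ) ≤ 3 ^ n := by
        have h1 : n < 2 ^ n := Nat.lt_two_pow_self
        have h2 : (2 : ℕ) ^ n ≤ 3 ^ n := Nat.pow_le_pow_left (by norm_num) n
        exact_mod_cast (h1.le.trans h2)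
      calc ‖rS v x‖ ≤ ∑ k : Fin n, ‖v k‖ := norm_rS_le _ _
        _ ≤ ∑ _k : Fin n, σ := Finset.sum_le_sum fun k _ => hvσ k
        _ = n * σ := by rw [Finset.sum_const, Finset.card_univ, Fintype.card_fin,
            nsmul_eq_mul]
        _ ≤ 3 ^ n * t₀ := mul_le_mul hn3 ht₀σ hσ0 (by positivity)
    -- layer cake, pointwise
    have hlayer : ∀ x : Fin n → Bool, ‖rS v x‖ ^ q ≤ (3 * t₀) ^ q
        + ∑ j ∈ Finset.Icc 1 n,
            (if 3 ^ j * t₀ < ‖rS v x‖ then ((3 : ℝ) ^ (j + 1) * t₀) ^ q else 0) := by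
      intro x
      have hterms : ∀ j ∈ Finset.Icc 1 n,
          0 ≤ (if 3 ^ j * t₀ < ‖rS v x‖ then ((3 : ℝ) ^ (j + 1) * t₀) ^ q else 0) := by
        intro j _
        split_ifs
        · positivity
        · exact le_refl 0
      by_cases hc : ‖rS v x‖ ≤ 3 * t₀
      · have h1 : ‖rS v x‖ ^ q ≤ (3 * t₀) ^ q :=
          Real.rpow_le_rpow (norm_nonneg _) hc hq0.le
        linarith [Finset.sum_nonneg hterms]
      · push_neg at hc
        have h1n : 1 ≤ n := by
          by_contra h
          have hn0 : n = 0 := by omega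
          have hthis := hub x
          have h3n : (3 : ℝ) ^ n = 1 := by rw [hn0]; norm_num
          rw [h3n, one_mul] at hthis
          linarith
        set P : ℕ → Prop := fun i => 3 ^ i * t₀ < ‖rS v x‖ with hPdef
        have hP1 : P 1 := by
          rw [hPdef]
          simpa using hc
        set j := Nat.findGreatest P n with hjdef
        have hj1 : 1 ≤ j := Nat.le_findGreatest h1n hP1
        have hjn : j ≤ n := Nat.findGreatest_le n
        have hPj : P j := Nat.findGreatest_spec h1n hP1
        have hjltn : j < n := by
          rcases lt_or_eq_of_le hjn with h | h
          · exact h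
          · exfalso
            rw [h] at hPj
            exact absurd (hub x) (not_le.mpr hPj)
        have hnot : ¬ P (j + 1) :=
          Nat.findGreatest_is_greatest (Nat.lt_succ_self _) hjltn
        have hle : ‖rS v x‖ ≤ 3 ^ (j + 1) * t₀ := not_lt.mp hnot
        have hterm : ‖rS v x‖ ^ q ≤ ((3 : ℝ) ^ (j + 1) * t₀) ^ q :=
          Real.rpow_le_rpow (norm_nonneg _) hle hq0.le
        have hsel : ((3 : ℝ) ^ (j + 1) * t₀) ^ q ≤ ∑ j ∈ Finset.Icc 1 n,
            (if 3 ^ j * t₀ < ‖rS v x‖ then ((3 : ℝ) ^ (j + 1) * t₀) ^ q else 0) := by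
          have hmem : j ∈ Finset.Icc 1 n := Finset.mem_Icc.mpr ⟨hj1, hjn⟩
          have := Finset.single_le_sum hterms hmem
          rwa [if_pos hPj] at this
        have h30 : (0:ℝ) ≤ (3 * t₀) ^ q := by positivity
        linarith
    -- averaging
    have hcard : ((Finset.univ : Finset (Fin n → Bool)).card : ℝ) = 2 ^ n := by
      rw [Finset.card_univ]
      simp [Fintype.card_fun]
    have hPtc : ∀ j : ℕ,
        (((Finset.univ.filter fun x : Fin n → Bool => 3 ^ j * t₀ < ‖rS v x‖).card : ℝ))
          = 2 ^ n * Pt (3 ^ j * t₀) := by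
      intro j
      rw [hPtdef]
      field_simp
    have havg : ∑ x : Fin n → Bool, ‖rS v x‖ ^ q
        ≤ 2 ^ n * ((3 * t₀) ^ q
            + ∑ j ∈ Finset.Icc 1 n, Pt (3 ^ j * t₀) * ((3 : ℝ) ^ (j + 1) * t₀) ^ q) := by
      calc ∑ x : Fin n → Bool, ‖rS v x‖ ^ q
          ≤ ∑ x : Fin n → Bool, ((3 * t₀) ^ q + ∑ j ∈ Finset.Icc 1 n,
              (if 3 ^ j * t₀ < ‖rS v x‖ then ((3 : ℝ) ^ (j + 1) * t₀) ^ q else 0)) :=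
            Finset.sum_le_sum fun x _ => hlayer x
        _ = 2 ^ n * (3 * t₀) ^ q + ∑ j ∈ Finset.Icc 1 n,
            (((Finset.univ.filter fun x : Fin n → Bool => 3 ^ j * t₀ < ‖rS v x‖).card : ℝ)
              * ((3 : ℝ) ^ (j + 1) * t₀) ^ q) := by
            rw [Finset.sum_add_distrib]
            congr 1
            · rw [Finset.sum_const, nsmul_eq_mul, hcard]
            · rw [Finset.sum_comm]
              refine Finset.sum_congr rfl fun j _ => ?_
              rw [← Finset.sum_filter, Finset.sum_const, nsmul_eq_mul]
        _ = 2 ^ n * ((3 * t₀) ^ q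
            + ∑ j ∈ Finset.Icc 1 n, Pt (3 ^ j * t₀) * ((3 : ℝ) ^ (j + 1) * t₀) ^ q) := by
            rw [mul_add, Finset.mul_sum]
            congr 1
            refine Finset.sum_congr rfl fun j _ => ?_
            rw [hPtc j]
            ring
    -- geometric series bound
    have hgeom : ∑ j ∈ Finset.Icc 1 n, ((1 : ℝ) / 3) ^ j ≤ 3 / 2 := by
      have hsub : Finset.Icc 1 n ⊆ Finset.range (n + 1) := by
        intro j hj
        rw [Finset.mem_Icc] at hj
        rw [Finset.mem_range]
        omega
      have h1 : ∑ j ∈ Finset.Icc 1 n, ((1 : ℝ) / 3) ^ j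
          ≤ ∑ j ∈ Finset.range (n + 1), ((1 : ℝ) / 3) ^ j :=
        Finset.sum_le_sum_of_subset_of_nonneg hsub (fun j _ _ => by positivity)
      have h2 : ∑ j ∈ Finset.range (n + 1), ((1 : ℝ) / 3) ^ j
          = (((1 : ℝ) / 3) ^ (n + 1) - 1) / ((1 : ℝ) / 3 - 1) :=
        geom_sum_eq (by norm_num) (n + 1)
      have h3 : (0 : ℝ) ≤ ((1 : ℝ) / 3) ^ (n + 1) := by positivity
      have h4 : (((1 : ℝ) / 3) ^ (n + 1) - 1) / ((1 : ℝ) / 3 - 1)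
          = (1 - ((1 : ℝ) / 3) ^ (n + 1)) * (3 / 2) := by ring
      rw [h2, h4] at h1
      nlinarith [h3]
    -- per-term bound
    have hterm : ∀ j ∈ Finset.Icc 1 n, Pt (3 ^ j * t₀) * ((3 : ℝ) ^ (j + 1) * t₀) ^ q
        ≤ (1 / 4) * ((1 : ℝ) / 3) ^ j * t₀ ^ q := by
      intro j _
      have hPj : Pt (3 ^ j * t₀) ≤ (1 / 4) * (3 : ℝ) ^ (-(2 * q) * 2 ^ j) := by
        linarith [htail j]
      have hc : ((3 : ℝ) ^ (j + 1) * t₀) ^ q = (3 : ℝ) ^ (((j + 1 : ℕ) : ℝ) * q) * t₀ ^ q := by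
        rw [Real.mul_rpow (by positivity) ht₀pos.le,
          Real.rpow_natCast_mul (by norm_num : (0:ℝ) ≤ 3)]
      have hexp : (3 : ℝ) ^ (-(2 * q) * 2 ^ j) * (3 : ℝ) ^ (((j + 1 : ℕ) : ℝ) * q)
          ≤ ((1 : ℝ) / 3) ^ j := by
        rw [← Real.rpow_add (by norm_num : (0:ℝ) < 3)]
        have hj2 : j < 2 ^ j := Nat.lt_two_pow_self
        have h2j : 2 * j + 1 ≤ 2 ^ (j + 1) := by
          rw [pow_succ]
          omega
        have hcast : ((2 * j + 1 : ℕ) : ℝ) ≤ ((2 ^ (j + 1) : ℕ) : ℝ) := Nat.cast_le.mpr h2j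
        push_cast at hcast
        have hj0 : (0 : ℝ) ≤ (j : ℝ) := Nat.cast_nonneg j
        have hle : -(2 * q) * 2 ^ j + ((j + 1 : ℕ) : ℝ) * q ≤ -(j : ℝ) := by
          push_cast
          nlinarith [pow_succ (2 : ℝ) j, mul_le_mul_of_nonneg_left hcast hq0.le,
            mul_le_mul_of_nonneg_left hq hj0]
        calc (3 : ℝ) ^ (-(2 * q) * 2 ^ j + ((j + 1 : ℕ) : ℝ) * q)
            ≤ (3 : ℝ) ^ (-(j : ℝ)) :=
              Real.rpow_le_rpow_of_exponent_le (by norm_num) hle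
          _ = ((1 : ℝ) / 3) ^ j := by
              rw [Real.rpow_neg (by norm_num : (0:ℝ) ≤ 3), Real.rpow_natCast, one_div,
                inv_pow]
      have ht0q : (0 : ℝ) ≤ t₀ ^ q := by positivity
      calc Pt (3 ^ j * t₀) * ((3 : ℝ) ^ (j + 1) * t₀) ^ q
          = Pt (3 ^ j * t₀) * ((3 : ℝ) ^ (((j + 1 : ℕ) : ℝ) * q) * t₀ ^ q) := by rw [hc]
        _ ≤ ((1 / 4) * (3 : ℝ) ^ (-(2 * q) * 2 ^ j))
            * ((3 : ℝ) ^ (((j + 1 : ℕ) : ℝ) * q) * t₀ ^ q) :=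
            mul_le_mul_of_nonneg_right hPj (by positivity)
        _ = (1 / 4) * ((3 : ℝ) ^ (-(2 * q) * 2 ^ j) * (3 : ℝ) ^ (((j + 1 : ℕ) : ℝ) * q))
            * t₀ ^ q := by ring
        _ ≤ (1 / 4) * ((1 : ℝ) / 3) ^ j * t₀ ^ q := by
            have h5 := mul_le_mul_of_nonneg_right hexp ht0q
            linarith
    have hseries : ∑ j ∈ Finset.Icc 1 n, Pt (3 ^ j * t₀) * ((3 : ℝ) ^ (j + 1) * t₀) ^ q
        ≤ t₀ ^ q := by
      have ht0q : (0 : ℝ) ≤ t₀ ^ q := by positivity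
      calc ∑ j ∈ Finset.Icc 1 n, Pt (3 ^ j * t₀) * ((3 : ℝ) ^ (j + 1) * t₀) ^ q
          ≤ ∑ j ∈ Finset.Icc 1 n, (1 / 4) * ((1 : ℝ) / 3) ^ j * t₀ ^ q :=
            Finset.sum_le_sum hterm
        _ = (1 / 4) * (∑ j ∈ Finset.Icc 1 n, ((1 : ℝ) / 3) ^ j) * t₀ ^ q := by
            rw [← Finset.sum_mul, ← Finset.mul_sum]
        _ ≤ t₀ ^ q := by
            have hS0 : 0 ≤ ∑ j ∈ Finset.Icc 1 n, ((1 : ℝ) / 3) ^ j :=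
              Finset.sum_nonneg fun j _ => by positivity
            have h6 := mul_le_mul_of_nonneg_right hgeom ht0q
            nlinarith [h6, ht0q]
    -- conclusion
    have hfinal : (1 / 2 ^ n : ℝ) * ∑ x : Fin n → Bool, ‖rS v x‖ ^ q
        ≤ ((3 : ℝ) ^ q + 1) * t₀ ^ q := by
      have h1 : (1 / 2 ^ n : ℝ) * ∑ x : Fin n → Bool, ‖rS v x‖ ^ q
          ≤ (3 * t₀) ^ q + ∑ j ∈ Finset.Icc 1 n, Pt (3 ^ j * t₀)
            * ((3 : ℝ) ^ (j + 1) * t₀) ^ q := by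
        have h2 := mul_le_mul_of_nonneg_left havg (le_of_lt (by positivity :
          (0:ℝ) < 1 / 2 ^ n))
        calc (1 / 2 ^ n : ℝ) * ∑ x : Fin n → Bool, ‖rS v x‖ ^ q ≤ (1 / 2 ^ n : ℝ)
              * (2 ^ n * ((3 * t₀) ^ q + ∑ j ∈ Finset.Icc 1 n, Pt (3 ^ j * t₀)
                * ((3 : ℝ) ^ (j + 1) * t₀) ^ q)) := h2
          _ = (3 * t₀) ^ q + ∑ j ∈ Finset.Icc 1 n, Pt (3 ^ j * t₀)
              * ((3 : ℝ) ^ (j + 1) * t₀) ^ q := by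
              field_simp
      have h2 : (3 * t₀) ^ q = (3 : ℝ) ^ q * t₀ ^ q :=
        Real.mul_rpow (by norm_num) ht₀pos.le
      rw [h2] at h1
      rw [add_mul, one_mul]
      linarith [hseries]
    refine hfinal.trans ?_
    have hKs : t₀ ^ q ≤ (K * σ) ^ q := Real.rpow_le_rpow ht₀pos.le ht₀K hq0.le
    have h3q1 : (0 : ℝ) ≤ (3 : ℝ) ^ q + 1 := by positivity
    have := mul_le_mul_of_nonneg_left hKs h3q1
    exact this
end core

section mink

variable {α : Type*} [MeasurableSpace α] {μ : MeasureTheory.Measure α}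

lemma mink_sum {ι : Type*} (s : Finset ι) (f : ι → α → ℝ≥0∞)
    (hf : ∀ i ∈ s, AEMeasurable (f i) μ) (pp : ℝ) (hpp : 1 ≤ pp) :
    (∫⁻ a, (∑ i ∈ s, f i a) ^ pp ∂μ) ^ (1 / pp)
      ≤ ∑ i ∈ s, (∫⁻ a, f i a ^ pp ∂μ) ^ (1 / pp) := by
  classical
  have hpp0 : (0 : ℝ) < pp := lt_of_lt_of_le zero_lt_one hpp
  induction s using Finset.induction_on with
  | empty =>
    simp only [Finset.sum_empty]
    rw [show ∫⁻ a, (0 : ℝ≥0∞) ^ pp ∂μ = 0 by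
      simp [ENNReal.zero_rpow_of_pos hpp0]]
    rw [ENNReal.zero_rpow_of_pos (by positivity)]
  | insert a s ha ih =>
    have hfa : AEMeasurable (f a) μ := hf a (Finset.mem_insert_self a s)
    have hfs : AEMeasurable (fun x => ∑ i ∈ s, f i x) μ :=
      Finset.aemeasurable_fun_sum s fun i hi => hf i (Finset.mem_insert_of_mem hi)
    have key := ENNReal.lintegral_Lp_add_le hfa hfs hpp
    rw [Finset.sum_insert ha]
    calc (∫⁻ x, (∑ i ∈ insert a s, f i x) ^ pp ∂μ) ^ (1 / pp)
        = (∫⁻ x, ((f a + fun y => ∑ i ∈ s, f i y) x) ^ pp ∂μ) ^ (1 / pp) := by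
          congr 1
          refine lintegral_congr fun x => ?_
          rw [Finset.sum_insert ha]
          rfl
      _ ≤ (∫⁻ x, f a x ^ pp ∂μ) ^ (1 / pp)
          + (∫⁻ x, (∑ i ∈ s, f i x) ^ pp ∂μ) ^ (1 / pp) := key
      _ ≤ (∫⁻ x, f a x ^ pp ∂μ) ^ (1 / pp)
          + ∑ i ∈ s, (∫⁻ x, f i x ^ pp ∂μ) ^ (1 / pp) :=
          add_le_add_right (ih fun i hi => hf i (Finset.mem_insert_of_mem hi)) _

lemma Lp_coeFn_sum {E : Type*} [NormedAddCommGroup E] {P : ℝ≥0∞} {ι : Type*}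
    (s : Finset ι) (f : ι → MeasureTheory.Lp E P μ) :
    ⇑(∑ i ∈ s, f i) =ᵐ[μ] fun a => ∑ i ∈ s, f i a := by
  classical
  induction s using Finset.induction_on with
  | empty =>
    simp only [Finset.sum_empty]
    filter_upwards [MeasureTheory.Lp.coeFn_zero E P μ] with a ha
    exact ha
  | insert a s ha ih =>
    rw [Finset.sum_insert ha]
    filter_upwards [MeasureTheory.Lp.coeFn_add (f a) (∑ i ∈ s, f i), ih] with x h1 h2
    rw [h1]
    simp only [Pi.add_apply, Finset.sum_insert ha, h2]

end mink


lemma rsgn_eq {n : ℕ} (x : Fin n → Bool) (k : Fin n) :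
    (if x k then (1 : ℝ) else -1) = rsgn x k := rfl


set_option maxHeartbeats 2000000 in
/-- **Rademacher type of Bochner spaces.**  If `B` is a Banach space of type `p ∈ (1,2]`
and `q ∈ [1,∞)`, then the Bochner space `L^q(A;B)` is of type `p ∧ q`: there is `M` such
that for all finite families `b₁,…,b_N ∈ L^q(A;B)` and Rademacher signs,
`E[‖∑ₖ Xₖ bₖ‖_{L^q(A;B)}] ≤ M (∑ₖ ‖bₖ‖_{L^q(A;B)}^{p∧q})^{1/(p∧q)}`. -/
theorem stmt11 {A : Type} [MeasurableSpace A] (ν : Measure A)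
    {B : Type} [NormedAddCommGroup B] [NormedSpace ℝ B]
    (p q : ℝ) (hp1 : 1 < p) (hp2 : p ≤ 2) (hq : 1 ≤ q)
    [Fact (1 ≤ ENNReal.ofReal q)]
    (Mp : ℝ) (hMp : 0 < Mp)
    (htype : ∀ (n : ℕ) (b : Fin n → B),
      (1 / 2 ^ n : ℝ) * ∑ x : Fin n → Bool, ‖∑ i, (if x i then (1 : ℝ) else -1) • b i‖
        ≤ Mp * (∑ i, ‖b i‖ ^ p) ^ (1 / p)) :
    ∃ M : ℝ, 0 < M ∧
      ∀ (N : ℕ) (b : Fin N → Lp B (ENNReal.ofReal q) ν),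
        (1 / 2 ^ N : ℝ) * ∑ x : Fin N → Bool,
            ‖∑ k, (if x k then (1 : ℝ) else -1) • b k‖
          ≤ M * (∑ k, ‖b k‖ ^ (min p q)) ^ (1 / min p q) := by
  classical
  have hq0 : (0 : ℝ) < q := lt_of_lt_of_le zero_lt_one hq
  set r := min p q with hrdef
  have hr1 : 1 ≤ r := le_min hp1.le hq
  have hr0 : (0 : ℝ) < r := lt_of_lt_of_le zero_lt_one hr1
  have hrq : r ≤ q := min_le_right _ _
  have hqr1 : 1 ≤ q / r := (one_le_div hr0).mpr hrq
  have hqr0 : (0 : ℝ) < q / r := by positivity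
  set C := ((3 : ℝ) ^ q + 1) * (4 * 3 ^ (2 * q) * Mp + 1) ^ q with hCdef
  have hC0 : 0 < C := by
    have h1 : (0 : ℝ) < (3 : ℝ) ^ q := Real.rpow_pos_of_pos (by norm_num) _
    have h2 : (0 : ℝ) < (4 * 3 ^ (2 * q) * Mp + 1 : ℝ) := by
      have : (0 : ℝ) < (3 : ℝ) ^ (2 * q) := Real.rpow_pos_of_pos (by norm_num) _
      nlinarith
    have h3 : (0 : ℝ) < ((4 * 3 ^ (2 * q) * Mp + 1 : ℝ)) ^ q :=
      Real.rpow_pos_of_pos h2 _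
    nlinarith
  refine ⟨C ^ (1 / q), Real.rpow_pos_of_pos hC0 _, ?_⟩
  set Q := ENNReal.ofReal q with hQdef
  intro N b
  have hQ0 : Q ≠ 0 := by
    rw [hQdef, Ne, ENNReal.ofReal_eq_zero]
    push_neg
    exact hq0
  have hQtop : Q ≠ ∞ := ENNReal.ofReal_ne_top
  have hQr : Q.toReal = q := ENNReal.toReal_ofReal hq0.le
  simp only [rsgn_eq]
  have h2N : (0 : ℝ) < 2 ^ N := by positivity
  -- the Lp-valued signed sums and their representatives
  set FF : (Fin N → Bool) → Lp B Q ν := fun x => ∑ k, rsgn x k • b k with hFFdef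
  set g : Fin N → A → B := fun k => ⇑(b k) with hgdef
  have hgm : ∀ k, AEStronglyMeasurable (g k) ν := fun k => Lp.aestronglyMeasurable (b k)
  have hGm : ∀ x : Fin N → Bool,
      AEStronglyMeasurable (fun a => ∑ k, rsgn x k • g k a) ν := fun x =>
    Finset.aestronglyMeasurable_fun_sum _ fun k _ => (hgm k).const_smul (rsgn x k)
  have hcoe : ∀ x : Fin N → Bool,
      ⇑(FF x) =ᵐ[ν] fun a => ∑ k, rsgn x k • g k a := by
    intro x
    refine (Lp_coeFn_sum Finset.univ (fun k => rsgn x k • b k)).trans ?_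
    have h2 : ∀ᵐ a ∂ν, ∀ k : Fin N, ⇑(rsgn x k • b k) a = rsgn x k • g k a := by
      rw [MeasureTheory.ae_all_iff]
      intro k
      exact Lp.coeFn_smul (rsgn x k) (b k)
    filter_upwards [h2] with a ha
    exact Finset.sum_congr rfl fun k _ => ha k
  -- the lintegrals
  set I : (Fin N → Bool) → ℝ≥0∞ :=
    fun x => ∫⁻ a, (‖∑ k, rsgn x k • g k a‖₊ : ℝ≥0∞) ^ q ∂ν with hIdef
  have hIm : ∀ x : Fin N → Bool,
      AEMeasurable (fun a => (‖∑ k, rsgn x k • g k a‖₊ : ℝ≥0∞) ^ q) ν := fun x =>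
    ((hGm x).enorm).pow_const q
  have heLp : ∀ x : Fin N → Bool, eLpNorm (FF x) Q ν = (I x) ^ (1 / q) := by
    intro x
    rw [eLpNorm_congr_ae (hcoe x), eLpNorm_eq_lintegral_rpow_enorm_toReal hQ0 hQtop, hQr]
    rfl
  have hIlt : ∀ x : Fin N → Bool, I x ≠ ∞ := by
    intro x
    have h1 := Lp.eLpNorm_lt_top (FF x)
    rw [heLp x] at h1
    exact ((ENNReal.rpow_lt_top_iff_of_pos (by positivity)).mp h1).ne
  have hnorm : ∀ x : Fin N → Bool, ‖FF x‖ = ((I x).toReal) ^ (1 / q) := by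
    intro x
    rw [Lp.norm_def, heLp x, ← ENNReal.toReal_rpow]
  have hnormq : ∀ x : Fin N → Bool, ‖FF x‖ ^ q = (I x).toReal := by
    intro x
    rw [hnorm x, ← Real.rpow_mul ENNReal.toReal_nonneg, one_div_mul_cancel hq0.ne',
      Real.rpow_one]
  -- Jensen (power mean) step
  have hJ : (1 / 2 ^ N : ℝ) * ∑ x : Fin N → Bool, ‖FF x‖
      ≤ ((1 / 2 ^ N : ℝ) * ∑ x : Fin N → Bool, ‖FF x‖ ^ q) ^ (1 / q) := by
    have hw : ∑ _x : Fin N → Bool, (1 / 2 ^ N : ℝ) = 1 := by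
      rw [Finset.sum_const, Finset.card_univ, nsmul_eq_mul]
      rw [show (Fintype.card (Fin N → Bool) : ℝ) = 2 ^ N by
        simp [Fintype.card_fun]]
      field_simp
    have hmap := (convexOn_rpow hq).map_sum_le (t := Finset.univ)
      (w := fun _ : Fin N → Bool => (1 / 2 ^ N : ℝ)) (p := fun x => ‖FF x‖)
      (fun _ _ => by positivity) hw (fun x _ => Set.mem_Ici.mpr (norm_nonneg _))
    simp only [smul_eq_mul] at hmap
    have hSa0 : 0 ≤ ∑ x : Fin N → Bool, (1 / 2 ^ N : ℝ) * ‖FF x‖ :=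
      Finset.sum_nonneg fun x _ => by positivity
    calc (1 / 2 ^ N : ℝ) * ∑ x : Fin N → Bool, ‖FF x‖
        = ∑ x : Fin N → Bool, (1 / 2 ^ N : ℝ) * ‖FF x‖ := Finset.mul_sum _ _ _
      _ = ((∑ x : Fin N → Bool, (1 / 2 ^ N : ℝ) * ‖FF x‖) ^ q) ^ (1 / q) := by
          rw [← Real.rpow_mul hSa0, mul_one_div, div_self hq0.ne', Real.rpow_one]
      _ ≤ ((∑ x : Fin N → Bool, (1 / 2 ^ N : ℝ) * ‖FF x‖ ^ q)) ^ (1 / q) := by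
          refine Real.rpow_le_rpow (by positivity) hmap (by positivity)
      _ = ((1 / 2 ^ N : ℝ) * ∑ x : Fin N → Bool, ‖FF x‖ ^ q) ^ (1 / q) := by
          rw [← Finset.mul_sum]
  -- core pointwise bound
  have hcore := coreA p q Mp hp1 hq hMp
    (by intro m w; simpa only [rS, rsgn] using htype m w)
  have hpt : ∀ a : A, (∑ x : Fin N → Bool, (‖∑ k, rsgn x k • g k a‖₊ : ℝ≥0∞) ^ q)
      ≤ ENNReal.ofReal (2 ^ N * C)
        * (∑ k, (‖g k a‖₊ : ℝ≥0∞) ^ r) ^ (q / r) := by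
    intro a
    have h1 := hcore N (fun k => g k a)
    have hsw0 : 0 ≤ ∑ i : Fin N, ‖g i a‖ ^ r :=
      Finset.sum_nonneg fun i _ => Real.rpow_nonneg (norm_nonneg _) _
    have hKσ : ((3 : ℝ) ^ q + 1) *
        ((4 * 3 ^ (2 * q) * Mp + 1) * (∑ i : Fin N, ‖g i a‖ ^ r) ^ (1 / r)) ^ q
        = C * (∑ i : Fin N, ‖g i a‖ ^ r) ^ (q / r) := by
      rw [Real.mul_rpow (by positivity) (Real.rpow_nonneg hsw0 _),
        ← Real.rpow_mul hsw0, hCdef]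
      rw [show (1 / r) * q = q / r by ring]
      ring
    rw [← hrdef] at h1
    rw [hKσ] at h1
    have h2 : ∑ x : Fin N → Bool, ‖rS (fun k => g k a) x‖ ^ q
        ≤ 2 ^ N * (C * (∑ i : Fin N, ‖g i a‖ ^ r) ^ (q / r)) := by
      have h3 := mul_le_mul_of_nonneg_left h1 h2N.le
      calc ∑ x : Fin N → Bool, ‖rS (fun k => g k a) x‖ ^ q
          = 2 ^ N * ((1 / 2 ^ N : ℝ) * ∑ x : Fin N → Bool,
              ‖rS (fun k => g k a) x‖ ^ q) := by field_simp
        _ ≤ 2 ^ N * (C * (∑ i : Fin N, ‖g i a‖ ^ r) ^ (q / r)) := h3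
    calc ∑ x : Fin N → Bool, (‖∑ k, rsgn x k • g k a‖₊ : ℝ≥0∞) ^ q
        = ENNReal.ofReal (∑ x : Fin N → Bool, ‖rS (fun k => g k a) x‖ ^ q) := by
          rw [ENNReal.ofReal_sum_of_nonneg (fun x _ => by positivity)]
          refine Finset.sum_congr rfl fun x _ => ?_
          rw [← enorm_eq_nnnorm, ← ofReal_norm, ENNReal.ofReal_rpow_of_nonneg
            (norm_nonneg _) hq0.le]
          rfl
      _ ≤ ENNReal.ofReal (2 ^ N * (C * (∑ i : Fin N, ‖g i a‖ ^ r) ^ (q / r))) :=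
          ENNReal.ofReal_le_ofReal h2
      _ = ENNReal.ofReal (2 ^ N * C)
          * (∑ k, (‖g k a‖₊ : ℝ≥0∞) ^ r) ^ (q / r) := by
          rw [show (2 ^ N : ℝ) * (C * (∑ i : Fin N, ‖g i a‖ ^ r) ^ (q / r))
            = (2 ^ N * C) * (∑ i : Fin N, ‖g i a‖ ^ r) ^ (q / r) by ring]
          rw [ENNReal.ofReal_mul (by positivity)]
          congr 1
          rw [← ENNReal.ofReal_rpow_of_nonneg hsw0 hqr0.le]
          congr 1
          rw [ENNReal.ofReal_sum_of_nonneg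
            (fun i _ => Real.rpow_nonneg (norm_nonneg _) _)]
          refine Finset.sum_congr rfl fun k _ => ?_
          rw [← enorm_eq_nnnorm, ← ofReal_norm, ENNReal.ofReal_rpow_of_nonneg
            (norm_nonneg _) hr0.le]
  -- integrate the pointwise bound and apply Minkowski
  have hEk : ∀ k : Fin N, (∫⁻ a, (‖g k a‖₊ : ℝ≥0∞) ^ q ∂ν)
      = (eLpNorm (b k) Q ν) ^ q := by
    intro k
    rw [eLpNorm_eq_lintegral_rpow_enorm_toReal hQ0 hQtop, hQr,
      ← ENNReal.rpow_mul, one_div_mul_cancel hq0.ne', ENNReal.rpow_one]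
    rfl
  have hlint : ∑ x : Fin N → Bool, I x
      ≤ ENNReal.ofReal (2 ^ N * C)
        * (∑ k, (eLpNorm (b k) Q ν) ^ r) ^ (q / r) := by
    have hmink := mink_sum Finset.univ (fun k a => (‖g k a‖₊ : ℝ≥0∞) ^ r)
      (fun k _ => ((hgm k).enorm).pow_const r) (q / r) hqr1
    have hmink2 : (∫⁻ a, (∑ k, (‖g k a‖₊ : ℝ≥0∞) ^ r) ^ (q / r) ∂ν)
        ≤ (∑ k, (eLpNorm (b k) Q ν) ^ r) ^ (q / r) := by
      have h4 := ENNReal.rpow_le_rpow hmink hqr0.le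
      rw [one_div, ENNReal.rpow_inv_rpow hqr0.ne'] at h4
      refine h4.trans ?_
      refine le_of_eq ?_
      congr 1
      refine Finset.sum_congr rfl fun k _ => ?_
      have hinner : (∫⁻ a, ((‖g k a‖₊ : ℝ≥0∞) ^ r) ^ (q / r) ∂ν)
          = ∫⁻ a, (‖g k a‖₊ : ℝ≥0∞) ^ q ∂ν := by
        refine lintegral_congr fun a => ?_
        rw [← ENNReal.rpow_mul]
        congr 1
        field_simp
      rw [hinner, hEk k, ← ENNReal.rpow_mul]
      congr 1
      field_simp
    calc ∑ x : Fin N → Bool, I x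
        = ∫⁻ a, ∑ x : Fin N → Bool, (‖∑ k, rsgn x k • g k a‖₊ : ℝ≥0∞) ^ q ∂ν :=
          (lintegral_finset_sum' _ fun x _ => hIm x).symm
      _ ≤ ∫⁻ a, ENNReal.ofReal (2 ^ N * C)
            * (∑ k, (‖g k a‖₊ : ℝ≥0∞) ^ r) ^ (q / r) ∂ν :=
          lintegral_mono fun a => hpt a
      _ = ENNReal.ofReal (2 ^ N * C)
            * ∫⁻ a, (∑ k, (‖g k a‖₊ : ℝ≥0∞) ^ r) ^ (q / r) ∂ν :=
          lintegral_const_mul' _ _ ENNReal.ofReal_ne_top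
      _ ≤ ENNReal.ofReal (2 ^ N * C)
            * (∑ k, (eLpNorm (b k) Q ν) ^ r) ^ (q / r) :=
          by gcongr
  -- convert back to real numbers
  have hsumE : ((∑ k, (eLpNorm (b k) Q ν) ^ r)).toReal = ∑ k, ‖b k‖ ^ r := by
    rw [ENNReal.toReal_sum (fun k _ =>
      (ENNReal.rpow_lt_top_of_nonneg hr0.le (Lp.eLpNorm_ne_top (b k))).ne)]
    refine Finset.sum_congr rfl fun k _ => ?_
    rw [← ENNReal.toReal_rpow, Lp.norm_def]
  have hXfin : (∑ k, (eLpNorm (b k) Q ν) ^ r) ≠ ∞ := by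
    refine (ENNReal.sum_lt_top.mpr fun k _ =>
      ENNReal.rpow_lt_top_of_nonneg hr0.le (Lp.eLpNorm_ne_top (b k))).ne
  have hX0 : 0 ≤ ∑ k, ‖b k‖ ^ r :=
    Finset.sum_nonneg fun k _ => Real.rpow_nonneg (norm_nonneg _) _
  have hRHSfin : ENNReal.ofReal (2 ^ N * C)
      * (∑ k, (eLpNorm (b k) Q ν) ^ r) ^ (q / r) ≠ ∞ :=
    ENNReal.mul_ne_top ENNReal.ofReal_ne_top
      (ENNReal.rpow_lt_top_of_nonneg hqr0.le hXfin).ne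
  have hmid : (1 / 2 ^ N : ℝ) * ∑ x : Fin N → Bool, ‖FF x‖ ^ q
      ≤ C * (∑ k, ‖b k‖ ^ r) ^ (q / r) := by
    have h5 : ∑ x : Fin N → Bool, ‖FF x‖ ^ q = (∑ x : Fin N → Bool, I x).toReal := by
      rw [ENNReal.toReal_sum fun x _ => hIlt x]
      exact Finset.sum_congr rfl fun x _ => hnormq x
    rw [h5]
    have h6 := ENNReal.toReal_mono hRHSfin hlint
    rw [ENNReal.toReal_mul, ENNReal.toReal_ofReal (by positivity),
      ← ENNReal.toReal_rpow, hsumE] at h6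
    calc (1 / 2 ^ N : ℝ) * (∑ x : Fin N → Bool, I x).toReal
        ≤ (1 / 2 ^ N : ℝ) * (2 ^ N * C * (∑ k, ‖b k‖ ^ r) ^ (q / r)) :=
          mul_le_mul_of_nonneg_left h6 (by positivity)
      _ = C * (∑ k, ‖b k‖ ^ r) ^ (q / r) := by field_simp
  -- finish
  calc (1 / 2 ^ N : ℝ) * ∑ x : Fin N → Bool, ‖FF x‖
      ≤ ((1 / 2 ^ N : ℝ) * ∑ x : Fin N → Bool, ‖FF x‖ ^ q) ^ (1 / q) := hJ
    _ ≤ (C * (∑ k, ‖b k‖ ^ r) ^ (q / r)) ^ (1 / q) := by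
        refine Real.rpow_le_rpow ?_ hmid (by positivity)
        have : 0 ≤ ∑ x : Fin N → Bool, ‖FF x‖ ^ q :=
          Finset.sum_nonneg fun x _ => by positivity
        positivity
    _ = C ^ (1 / q) * (∑ k, ‖b k‖ ^ r) ^ (1 / r) := by
        rw [Real.mul_rpow hC0.le (Real.rpow_nonneg hX0 _),
          ← Real.rpow_mul hX0]
        congr 1
        rw [show q / r * (1 / q) = 1 / r by field_simp]
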